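/- Let T > 0, N a positive integer, τ = T/N, t_k = kτ, and fix α ∈ (0,1). Assume τ ≤ 1. Define b_1^{(n)} = 1 + τ a_1^{(n)}(α) and b_j^{(n)} = τ a_j^{(n)}(α) for 2 ≤ j ≤ n. Then for every n with 1 ≤ n ≤ N, the coefficients satisfy b_1^{(n)} > b_2^{(n)} > ⋯ > b_n^{(n)} > 0. -/

import Mathlib

/-- The kernel `ω_{1-β}(t) = t^{-β} / Γ(1-β)`. -/
noncomputable def omegaK (β t : ℝ) : ℝ := t ^ (-β) / Real.Gamma (1 - β)

/-- The L1⁺ coefficient `a_j^{(n)}(α)` on the uniform mesh `t_k = k τ`: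
`a_{n-k+1}^{(n)}(α) = (1/τ²) ∫_{t_{n-1}}^{t_n} ∫_{t_{k-1}}^{min(t, t_k)} ω_{1-α}(t-s) ds dt`,
expressed with `j = n - k + 1`, i.e. `k = n - j + 1`. -/
noncomputable def acoef (τ α : ℝ) (n j : ℕ) : ℝ :=
  (1 / τ ^ 2) * ∫ t in (((n : ℝ) - 1) * τ)..((n : ℝ) * τ),
      ∫ s in (((n : ℝ) - (j : ℝ)) * τ)..(min t (((n : ℝ) - (j : ℝ) + 1) * τ)),
        omegaK α (t - s)

/-- `b_1^{(n)} = 1 + τ a_1^{(n)}(α)` and `b_j^{(n)} = τ a_j^{(n)}(α)` for `j ≥ 2`. -/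
noncomputable def bcoef (τ α : ℝ) (n j : ℕ) : ℝ :=
  if j = 1 then 1 + τ * acoef τ α n 1 else τ * acoef τ α n j

/-! ### Auxiliary lemmas -/

lemma inner_int (α t a b : ℝ) (hα : α < 1) :
    (∫ s in a..b, omegaK α (t - s)) =
      ((t - a) ^ (1 - α) - (t - b) ^ (1 - α)) / ((1 - α) * Real.Gamma (1 - α)) := by
  simp only [omegaK, div_eq_mul_inv]
  rw [intervalIntegral.integral_mul_const,
    intervalIntegral.integral_comp_sub_left (fun u => u ^ (-α)) t,
    integral_rpow (Or.inl (by linarith : (-1 : ℝ) < -α)),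
    show -α + 1 = 1 - α from by ring, ← div_eq_mul_inv, div_div]
  exact div_eq_mul_inv _ _

lemma shift_int (q c L U : ℝ) (hq : -1 < q) :
    (∫ t in L..U, (t - c) ^ q) = ((U - c) ^ (q + 1) - (L - c) ^ (q + 1)) / (q + 1) := by
  rw [intervalIntegral.integral_comp_sub_right (fun u => u ^ q) c,
    integral_rpow (Or.inl hq)]

lemma shift_int' (q c L U : ℝ) (hq : -1 < q) :
    (∫ t in L..U, (t + c) ^ q) = ((U + c) ^ (q + 1) - (L + c) ^ (q + 1)) / (q + 1) := by
  rw [intervalIntegral.integral_comp_add_right (fun u => u ^ q) c,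
    integral_rpow (Or.inl hq)]

lemma cont_add (q c : ℝ) (hq : 0 ≤ q) : Continuous fun t : ℝ => (t + c) ^ q :=
  (Real.continuous_rpow_const hq).comp (continuous_id.add continuous_const)

lemma cont_sub (q c : ℝ) (hq : 0 ≤ q) : Continuous fun t : ℝ => (t - c) ^ q :=
  (Real.continuous_rpow_const hq).comp (continuous_id.sub continuous_const)

lemma tau_acoef_one (τ : ℝ) (hτ : 0 < τ) (α : ℝ) (hα : α ∈ Set.Ioo (0 : ℝ) 1) (n : ℕ) :
    τ * acoef τ α n 1 = τ ^ (1 - α) / ((1 - α) * (2 - α) * Real.Gamma (1 - α)) := by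
  obtain ⟨hα0, hα1⟩ := hα
  have h1 : (0 : ℝ) < 1 - α := by linarith
  have h2 : (0 : ℝ) < 2 - α := by linarith
  have hΓ : 0 < Real.Gamma (1 - α) := Real.Gamma_pos_of_pos h1
  unfold acoef
  rw [Nat.cast_one, show (n : ℝ) - 1 + 1 = (n : ℝ) from by ring]
  have hLU : ((n : ℝ) - 1) * τ ≤ (n : ℝ) * τ := by nlinarith
  have key : Set.EqOn
      (fun t => ∫ s in (((n : ℝ) - 1) * τ)..(min t ((n : ℝ) * τ)), omegaK α (t - s))
      (fun t => (t - ((n : ℝ) - 1) * τ) ^ (1 - α) / ((1 - α) * Real.Gamma (1 - α)))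
      (Set.uIcc (((n : ℝ) - 1) * τ) ((n : ℝ) * τ)) := by
    intro t ht
    rw [Set.uIcc_of_le hLU] at ht
    simp only
    rw [min_eq_left ht.2, inner_int α t _ _ hα1, sub_self,
      Real.zero_rpow h1.ne', sub_zero]
  rw [intervalIntegral.integral_congr key, intervalIntegral.integral_div,
    shift_int (1 - α) _ _ _ (by linarith), show (1 : ℝ) - α + 1 = 2 - α from by ring,
    sub_self, Real.zero_rpow h2.ne',
    show (n : ℝ) * τ - ((n : ℝ) - 1) * τ = τ from by ring, sub_zero]
  have hτ2 : τ ^ (2 - α) = τ ^ (1 - α) * τ := by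
    rw [show (2 : ℝ) - α = (1 - α) + 1 from by ring, Real.rpow_add hτ, Real.rpow_one]
  rw [hτ2]
  field_simp

lemma tau_acoef_ge_two (τ : ℝ) (hτ : 0 < τ) (α : ℝ) (hα : α ∈ Set.Ioo (0 : ℝ) 1)
    (n j : ℕ) (hj : 2 ≤ j) :
    τ * acoef τ α n j = (τ ^ (1 - α) / ((1 - α) * (2 - α) * Real.Gamma (1 - α))) *
      ((j : ℝ) ^ (2 - α) - 2 * ((j : ℝ) - 1) ^ (2 - α) + ((j : ℝ) - 2) ^ (2 - α)) := by
  obtain ⟨hα0, hα1⟩ := hα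
  have h1 : (0 : ℝ) < 1 - α := by linarith
  have h2 : (0 : ℝ) < 2 - α := by linarith
  have hΓ : 0 < Real.Gamma (1 - α) := Real.Gamma_pos_of_pos h1
  have hjR : (2 : ℝ) ≤ (j : ℝ) := by exact_mod_cast hj
  unfold acoef
  have hLU : ((n : ℝ) - 1) * τ ≤ (n : ℝ) * τ := by nlinarith
  have hBL : ((n : ℝ) - (j : ℝ) + 1) * τ ≤ ((n : ℝ) - 1) * τ := by nlinarith
  have key : Set.EqOn
      (fun t => ∫ s in (((n : ℝ) - (j : ℝ)) * τ)..(min t (((n : ℝ) - (j : ℝ) + 1) * τ)),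
        omegaK α (t - s))
      (fun t => ((t - ((n : ℝ) - (j : ℝ)) * τ) ^ (1 - α)
          - (t - ((n : ℝ) - (j : ℝ) + 1) * τ) ^ (1 - α)) / ((1 - α) * Real.Gamma (1 - α)))
      (Set.uIcc (((n : ℝ) - 1) * τ) ((n : ℝ) * τ)) := by
    intro t ht
    rw [Set.uIcc_of_le hLU] at ht
    simp only
    rw [min_eq_right (le_trans hBL ht.1), inner_int α t _ _ hα1]
  rw [intervalIntegral.integral_congr key, intervalIntegral.integral_div,
    intervalIntegral.integral_sub
      ((cont_sub (1 - α) _ h1.le).intervalIntegrable _ _)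
      ((cont_sub (1 - α) _ h1.le).intervalIntegrable _ _),
    shift_int (1 - α) _ _ _ (by linarith), shift_int (1 - α) _ _ _ (by linarith),
    show (1 : ℝ) - α + 1 = 2 - α from by ring,
    show (n : ℝ) * τ - ((n : ℝ) - (j : ℝ)) * τ = (j : ℝ) * τ from by ring,
    show ((n : ℝ) - 1) * τ - ((n : ℝ) - (j : ℝ)) * τ = ((j : ℝ) - 1) * τ from by ring,
    show (n : ℝ) * τ - ((n : ℝ) - (j : ℝ) + 1) * τ = ((j : ℝ) - 1) * τ from by ring,
    show ((n : ℝ) - 1) * τ - ((n : ℝ) - (j : ℝ) + 1) * τ = ((j : ℝ) - 2) * τ from by ring,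
    Real.mul_rpow (by linarith : (0 : ℝ) ≤ (j : ℝ)) hτ.le,
    Real.mul_rpow (by linarith : (0 : ℝ) ≤ (j : ℝ) - 1) hτ.le,
    Real.mul_rpow (by linarith : (0 : ℝ) ≤ (j : ℝ) - 2) hτ.le]
  have hτ2 : τ ^ (2 - α) = τ ^ (1 - α) * τ := by
    rw [show (2 : ℝ) - α = (1 - α) + 1 from by ring, Real.rpow_add hτ, Real.rpow_one]
  rw [hτ2]
  field_simp
  ring

lemma g_pos {p x : ℝ} (hp1 : 1 < p) (hp2 : p < 2) (hx : 1 ≤ x) :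
    0 < (x + 1) ^ p - 2 * x ^ p + (x - 1) ^ p := by
  have hq0 : 0 < p - 1 := by linarith
  have hp0 : (0 : ℝ) < p := by linarith
  have hI : (∫ t in (x - 1)..x, ((t + 1) ^ (p - 1) - t ^ (p - 1)))
      = ((x + 1) ^ p - 2 * x ^ p + (x - 1) ^ p) / p := by
    rw [intervalIntegral.integral_sub
        ((cont_add (p - 1) 1 hq0.le).intervalIntegrable _ _)
        ((Real.continuous_rpow_const hq0.le).intervalIntegrable _ _),
      shift_int' (p - 1) 1 _ _ (by linarith),
      integral_rpow (Or.inl (by linarith : (-1 : ℝ) < p - 1)),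
      show p - 1 + 1 = p from by ring, show x - 1 + 1 = x from by ring]
    ring
  have hpos : 0 < ∫ t in (x - 1)..x, ((t + 1) ^ (p - 1) - t ^ (p - 1)) := by
    apply intervalIntegral.intervalIntegral_pos_of_pos_on
    · exact ((cont_add (p - 1) 1 hq0.le).sub
        (Real.continuous_rpow_const hq0.le)).intervalIntegrable _ _
    · intro t ht
      have ht0 : 0 ≤ t := by linarith [ht.1]
      have := Real.rpow_lt_rpow ht0 (lt_add_one t) hq0
      linarith
    · linarith
  rw [hI] at hpos
  have := mul_pos hpos hp0
  rwa [div_mul_cancel₀ _ hp0.ne'] at this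

lemma g_dec {p x : ℝ} (hp1 : 1 < p) (hp2 : p < 2) (hx : 1 ≤ x) :
    (x + 2) ^ p - 2 * (x + 1) ^ p + x ^ p < (x + 1) ^ p - 2 * x ^ p + (x - 1) ^ p := by
  have hq0 : 0 < p - 1 := by linarith
  have hq1 : p - 1 < 1 := by linarith
  have hp0 : (0 : ℝ) < p := by linarith
  have hI : (∫ t in (x - 1)..x, (2 * (t + 1) ^ (p - 1) - ((t + 2) ^ (p - 1) + t ^ (p - 1))))
      = (((x + 1) ^ p - 2 * x ^ p + (x - 1) ^ p)
          - ((x + 2) ^ p - 2 * (x + 1) ^ p + x ^ p)) / p := by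
    rw [intervalIntegral.integral_sub (f := fun t => 2 * (t + 1) ^ (p - 1))
        (g := fun t => (t + 2) ^ (p - 1) + t ^ (p - 1))
        ((continuous_const.mul (cont_add (p - 1) 1 hq0.le)).intervalIntegrable _ _)
        (((cont_add (p - 1) 2 hq0.le).add
          (Real.continuous_rpow_const hq0.le)).intervalIntegrable _ _),
      intervalIntegral.integral_const_mul,
      intervalIntegral.integral_add
        ((cont_add (p - 1) 2 hq0.le).intervalIntegrable _ _)
        ((Real.continuous_rpow_const hq0.le).intervalIntegrable _ _),
      shift_int' (p - 1) 1 _ _ (by linarith), shift_int' (p - 1) 2 _ _ (by linarith),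
      integral_rpow (Or.inl (by linarith : (-1 : ℝ) < p - 1)),
      show p - 1 + 1 = p from by ring, show x - 1 + 1 = x from by ring,
      show x - 1 + 2 = x + 1 from by ring]
    ring
  have hpos : 0 < ∫ t in (x - 1)..x,
      (2 * (t + 1) ^ (p - 1) - ((t + 2) ^ (p - 1) + t ^ (p - 1))) := by
    apply intervalIntegral.intervalIntegral_pos_of_pos_on
    · exact ((continuous_const.mul (cont_add (p - 1) 1 hq0.le)).sub
        ((cont_add (p - 1) 2 hq0.le).add
          (Real.continuous_rpow_const hq0.le))).intervalIntegrable _ _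
    · intro t ht
      have ht0 : 0 ≤ t := by linarith [ht.1]
      have hcc := (Real.strictConcaveOn_rpow hq0 hq1).2
        (Set.mem_Ici.2 ht0) (Set.mem_Ici.2 (by linarith : (0 : ℝ) ≤ t + 2))
        (by linarith : t ≠ t + 2) (by norm_num : (0 : ℝ) < 1 / 2)
        (by norm_num : (0 : ℝ) < 1 / 2) (by norm_num)
    -- hcc : 1/2 • t^(p-1) + 1/2 • (t+2)^(p-1) < ((1/2) • t + (1/2) • (t+2))^(p-1)
      simp only [smul_eq_mul] at hcc
      rw [show (1 / 2 : ℝ) * t + 1 / 2 * (t + 2) = t + 1 from by ring] at hcc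
      linarith
    · linarith
  rw [hI] at hpos
  have := mul_pos hpos hp0
  rw [div_mul_cancel₀ _ hp0.ne'] at this
  linarith

lemma D_gt_one {α : ℝ} (hα : α ∈ Set.Ioo (0 : ℝ) 1) :
    1 < (1 - α) * (2 - α) * Real.Gamma (1 - α) := by
  obtain ⟨h0, h1⟩ := hα
  have e1 : Real.Gamma (2 - α) = (1 - α) * Real.Gamma (1 - α) := by
    rw [show (2 : ℝ) - α = (1 - α) + 1 from by ring,
      Real.Gamma_add_one (by linarith : (1 : ℝ) - α ≠ 0)]
  have e2 : Real.Gamma (3 - α) = (2 - α) * Real.Gamma (2 - α) := by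
    rw [show (3 : ℝ) - α = (2 - α) + 1 from by ring,
      Real.Gamma_add_one (by linarith : (2 : ℝ) - α ≠ 0)]
  have hmono : Real.Gamma 2 < Real.Gamma (3 - α) :=
    Real.Gamma_strictMonoOn_Ici (Set.mem_Ici.2 le_rfl)
      (Set.mem_Ici.2 (by linarith : (2 : ℝ) ≤ 3 - α)) (by linarith)
  rw [Real.Gamma_two] at hmono
  rw [show (1 - α) * (2 - α) * Real.Gamma (1 - α) = Real.Gamma (3 - α) from by
    rw [e2, e1]; ring]
  exact hmono

theorem stmt2 (T : ℝ) (hT : 0 < T) (N : ℕ) (hN : 0 < N) (τ : ℝ) (hτ : τ = T / N)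
    (hτ1 : τ ≤ 1) (α : ℝ) (hα : α ∈ Set.Ioo (0 : ℝ) 1) :
    ∀ n : ℕ, 1 ≤ n → n ≤ N →
      (∀ j j' : ℕ, 1 ≤ j → j < j' → j' ≤ n → bcoef τ α n j' < bcoef τ α n j) ∧
      0 < bcoef τ α n n := by
  have hτ0 : 0 < τ := by
    rw [hτ]; exact div_pos hT (by exact_mod_cast hN)
  obtain ⟨hα0, hα1⟩ := hα
  have h1 : (0 : ℝ) < 1 - α := by linarith
  have h2 : (0 : ℝ) < 2 - α := by linarith
  have hΓ : 0 < Real.Gamma (1 - α) := Real.Gamma_pos_of_pos h1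
  have hp1 : (1 : ℝ) < 2 - α := by linarith
  have hp2 : (2 : ℝ) - α < 2 := by linarith
  set C : ℝ := τ ^ (1 - α) / ((1 - α) * (2 - α) * Real.Gamma (1 - α)) with hCdef
  have hD1 : 1 < (1 - α) * (2 - α) * Real.Gamma (1 - α) := D_gt_one ⟨hα0, hα1⟩
  have hD0 : 0 < (1 - α) * (2 - α) * Real.Gamma (1 - α) := by linarith
  have hC : 0 < C := div_pos (Real.rpow_pos_of_pos hτ0 _) hD0
  have hC1 : C ≤ 1 := by
    rw [hCdef, div_le_one hD0]
    calc τ ^ (1 - α) ≤ 1 := Real.rpow_le_one hτ0.le hτ1 h1.le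
      _ ≤ (1 - α) * (2 - α) * Real.Gamma (1 - α) := hD1.le
  intro n _hn1 _hnN
  have hbj : ∀ j : ℕ, 2 ≤ j → bcoef τ α n j =
      C * ((j : ℝ) ^ (2 - α) - 2 * ((j : ℝ) - 1) ^ (2 - α) + ((j : ℝ) - 2) ^ (2 - α)) := by
    intro j hj
    unfold bcoef
    rw [if_neg (by omega), tau_acoef_ge_two τ hτ0 α ⟨hα0, hα1⟩ n j hj]
  have hb1 : bcoef τ α n 1 = 1 + C := by
    unfold bcoef
    rw [if_pos rfl, tau_acoef_one τ hτ0 α ⟨hα0, hα1⟩ n]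
  -- one-step decrease
  have hstep : ∀ j : ℕ, 1 ≤ j → bcoef τ α n (j + 1) < bcoef τ α n j := by
    intro j hj
    rcases Nat.lt_or_ge j 2 with hj2 | hj2
    · -- j = 1
      have hj1 : j = 1 := by omega
      subst hj1
      rw [hb1, hbj 2 le_rfl]
      have e : ((2 : ℕ) : ℝ) ^ (2 - α) - 2 * (((2 : ℕ) : ℝ) - 1) ^ (2 - α)
          + (((2 : ℕ) : ℝ) - 2) ^ (2 - α) = (2 : ℝ) ^ (2 - α) - 2 := by
        push_cast
        rw [show (2 : ℝ) - 1 = 1 from by norm_num, show (2 : ℝ) - 2 = 0 from by norm_num,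
          Real.one_rpow, Real.zero_rpow h2.ne']
        ring
      rw [e]
      have h4 : (2 : ℝ) ^ (2 - α) < 4 := by
        have := Real.rpow_lt_rpow_of_exponent_lt (by norm_num : (1 : ℝ) < 2)
          (by linarith : 2 - α < (2 : ℝ))
        rwa [show ((2 : ℝ) : ℝ) ^ (2 : ℝ) = 4 from by
          rw [show (2 : ℝ) = ((2 : ℕ) : ℝ) from by norm_num, Real.rpow_natCast]; norm_num]
          at this
      have h20 : (0 : ℝ) < (2 : ℝ) ^ (2 - α) := Real.rpow_pos_of_pos (by norm_num) _
      rcases le_or_gt ((2 : ℝ) ^ (2 - α)) 3 with h | h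
      · nlinarith [mul_nonpos_of_nonneg_of_nonpos hC.le
          (by linarith : (2 : ℝ) ^ (2 - α) - 3 ≤ 0)]
      · nlinarith [mul_le_of_le_one_left (by linarith : (0 : ℝ) ≤ (2 : ℝ) ^ (2 - α) - 3) hC1]
    · -- j ≥ 2
      rw [hbj j hj2, hbj (j + 1) (by omega)]
      have hx : (1 : ℝ) ≤ (j : ℝ) - 1 := by
        have : (2 : ℝ) ≤ (j : ℝ) := by exact_mod_cast hj2
        linarith
      have hgd := g_dec hp1 hp2 hx
      rw [show (j : ℝ) - 1 + 2 = (j : ℝ) + 1 from by ring,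
        show (j : ℝ) - 1 + 1 = (j : ℝ) from by ring,
        show (j : ℝ) - 1 - 1 = (j : ℝ) - 2 from by ring] at hgd
      apply (mul_lt_mul_iff_right₀ hC).2
      push_cast
      rw [show (j : ℝ) + 1 - 1 = (j : ℝ) from by ring,
        show (j : ℝ) + 1 - 2 = (j : ℝ) - 1 from by ring]
      linarith
  -- chained decrease
  have chain : ∀ d j : ℕ, 1 ≤ j → bcoef τ α n (j + d + 1) < bcoef τ α n j := by
    intro d
    induction d with
    | zero => intro j hj; exact hstep j hj
    | succ d ih =>
        intro j hj
        have e : j + (d + 1) + 1 = (j + d + 1) + 1 := by omega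
        rw [e]
        exact lt_trans (hstep (j + d + 1) (by omega)) (ih j hj)
  constructor
  · intro j j' hj hjj' _hj'n
    have e : j' = j + (j' - j - 1) + 1 := by omega
    rw [e]
    exact chain _ j hj
  · rcases Nat.lt_or_ge n 2 with hn2 | hn2
    · have hn1 : n = 1 := by omega
      subst hn1
      rw [hb1]
      linarith
    · rw [hbj n hn2]
      have hx : (1 : ℝ) ≤ (n : ℝ) - 1 := by
        have : (2 : ℝ) ≤ (n : ℝ) := by exact_mod_cast hn2
        linarith
      have hgp := g_pos hp1 hp2 hx
      rw [show (n : ℝ) - 1 + 1 = (n : ℝ) from by ring,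
        show (n : ℝ) - 1 - 1 = (n : ℝ) - 2 from by ring] at hgp
      exact mul_pos hC hgp
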